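/- Let Q : ℝ^D × ℝ^D → ℝ be continuous, such that for each fixed y, the map x ↦ Q(x,y) is convex and strictly convex in each coordinate. Let (θ^(l)) be a sequence generated by coordinate-wise exact minimization of Q(·, θ^(l)) starting from θ^(l) (one full cycle through the D coordinates per iteration), and suppose ℓ(θ) := Q(θ,θ) - H(θ,θ) satisfies ℓ(θ^(l)) - ℓ(θ^(l+1)) → 0 and Q(θ^(l),θ^(l)) - Q(θ^(l+1),θ^(l)) ≤ ℓ(θ^(l)) - ℓ(θ^(l+1)). Then any cluster point θ̄ of (θ^(l)) is a coordinate-wise minimum of x ↦ Q(x, θ̄). -/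
import Mathlib

open Filter

private lemma convexOn_le_left {f : ℝ → ℝ} (hf : ConvexOn ℝ Set.univ f) {s u p : ℝ}
    (hp : p ∈ segment ℝ s u) (h : f u ≤ f s) : f p ≤ f s := by
  obtain ⟨a, b, ha, hb, hab, rfl⟩ := hp
  calc f (a • s + b • u) ≤ a • f s + b • f u :=
        hf.2 (Set.mem_univ s) (Set.mem_univ u) ha hb hab
    _ ≤ a * f s + b * f s := by simp only [smul_eq_mul]; nlinarith
    _ = f s := by rw [← add_mul, hab, one_mul]

private lemma strict_contra {g : ℝ → ℝ} (hg : StrictConvexOn ℝ Set.univ g) {a c : ℝ}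
    (hc : c ≠ 0) (h1 : g (a + c) = g a) (h2 : g (a + c / 2) = g a) : False := by
  have hne : a ≠ a + c := fun h => hc (by linarith [congrArg id h])
  have key := hg.2 (Set.mem_univ a) (Set.mem_univ (a + c)) hne
    (by norm_num : (0:ℝ) < 1/2) (by norm_num : (0:ℝ) < 1/2) (by norm_num)
  have heq : (1/2 : ℝ) • a + (1/2 : ℝ) • (a + c) = a + c / 2 := by
    simp only [smul_eq_mul]; ring
  rw [heq, h2, h1] at key
  simp only [smul_eq_mul] at key
  linarith

private lemma mid_mem_seg {x c : ℝ} {u : ℝ} (h : x + c ∈ segment ℝ x u) :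
    x + c / 2 ∈ segment ℝ x u := by
  rw [segment_eq_uIcc] at h ⊢
  have : x + c / 2 ∈ Set.uIcc x (x + c) := by
    rcases le_or_gt 0 c with hc | hc
    · exact Set.mem_uIcc.2 (Or.inl ⟨by linarith, by linarith⟩)
    · exact Set.mem_uIcc.2 (Or.inr ⟨by linarith, by linarith⟩)
  exact Set.uIcc_subset_uIcc Set.left_mem_uIcc h this

private lemma tendsto_Q_update {D : ℕ} (Q : (Fin D → ℝ) → (Fin D → ℝ) → ℝ)
    (hQcont : Continuous (fun p : (Fin D → ℝ) × (Fin D → ℝ) => Q p.1 p.2))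
    (j : Fin D) {x y : ℕ → Fin D → ℝ} {t : ℕ → ℝ} {θbar : Fin D → ℝ} {t₀ : ℝ}
    (hx : Tendsto x atTop (nhds θbar)) (hy : Tendsto y atTop (nhds θbar))
    (ht : Tendsto t atTop (nhds t₀)) :
    Tendsto (fun k => Q (Function.update (x k) j (t k)) (y k)) atTop
      (nhds (Q (Function.update θbar j t₀) θbar)) := by
  have h1 : Tendsto (fun k => (Function.update (x k) j (t k), y k)) atTop
      (nhds (Function.update θbar j t₀, θbar)) := (hx.update j ht).prodMk_nhds hy
  exact (hQcont.tendsto _).comp h1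

private lemma aux_contra {D : ℕ} (Q : (Fin D → ℝ) → (Fin D → ℝ) → ℝ)
    (hQcont : Continuous (fun p : (Fin D → ℝ) × (Fin D → ℝ) => Q p.1 p.2))
    (hQstrict : ∀ y x (j : Fin D),
      StrictConvexOn ℝ Set.univ (fun t : ℝ => Q (Function.update x j t) y))
    (θbar : Fin D → ℝ) (j : Fin D)
    (x y : ℕ → Fin D → ℝ) (u ε : ℕ → ℝ) (c : ℝ) (hc : c ≠ 0)
    (hx : Tendsto x atTop (nhds θbar)) (hy : Tendsto y atTop (nhds θbar))
    (hεt : Tendsto ε atTop (nhds 0))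
    (hmin : ∀ k t, Q (Function.update (x k) j (u k)) (y k) ≤ Q (Function.update (x k) j t) (y k))
    (hgap : ∀ k, Q (x k) (y k) - Q (Function.update (x k) j (u k)) (y k) ≤ ε k)
    (hseg : ∀ k, x k j + c ∈ segment ℝ (x k j) (u k)) : False := by
  have hconv : ∀ k, ConvexOn ℝ Set.univ (fun t : ℝ => Q (Function.update (x k) j t) (y k)) :=
    fun k => (hQstrict (y k) (x k) j).convexOn
  have hs : ∀ k, Q (Function.update (x k) j (x k j)) (y k) = Q (x k) (y k) := by
    intro k; rw [Function.update_eq_self]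
  have hbounds : ∀ (v : ℕ → ℝ), (∀ k, v k ∈ segment ℝ (x k j) (u k)) →
      ∀ k, Q (x k) (y k) - ε k ≤ Q (Function.update (x k) j (v k)) (y k) ∧
        Q (Function.update (x k) j (v k)) (y k) ≤ Q (x k) (y k) := by
    intro v hv k
    have hus : Q (Function.update (x k) j (u k)) (y k) ≤ Q (x k) (y k) := by
      have := hmin k (x k j); rwa [hs k] at this
    constructor
    · have h1 := hmin k (v k)
      have h2 := hgap k
      linarith
    · have := convexOn_le_left (hconv k) (hv k) (by rw [hs k]; exact hus)
      simpa [hs k] using this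
  have hsj : Tendsto (fun k => x k j) atTop (nhds (θbar j)) := tendsto_pi_nhds.1 hx j
  have hA : Tendsto (fun k => Q (x k) (y k)) atTop (nhds (Q θbar θbar)) :=
    ((hQcont.tendsto _).comp (hx.prodMk_nhds hy))
  have hAe : Tendsto (fun k => Q (x k) (y k) - ε k) atTop (nhds (Q θbar θbar)) := by
    simpa using hA.sub hεt
  have keylim : ∀ (c' : ℝ), (∀ k, x k j + c' ∈ segment ℝ (x k j) (u k)) →
      Q (Function.update θbar j (θbar j + c')) θbar = Q θbar θbar := by
    intro c' hv
    have hb := hbounds (fun k => x k j + c') hv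
    have hmid : Tendsto (fun k => Q (Function.update (x k) j (x k j + c')) (y k)) atTop
        (nhds (Q θbar θbar)) :=
      tendsto_of_tendsto_of_tendsto_of_le_of_le hAe hA (fun k => (hb k).1) (fun k => (hb k).2)
    have hmid2 : Tendsto (fun k => Q (Function.update (x k) j (x k j + c')) (y k)) atTop
        (nhds (Q (Function.update θbar j (θbar j + c')) θbar)) :=
      tendsto_Q_update Q hQcont j hx hy (by simpa using hsj.add_const c')
    exact tendsto_nhds_unique hmid2 hmid
  have h1 := keylim c (hseg)
  have h2 := keylim (c/2) (fun k => mid_mem_seg (hseg k))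
  have hg : StrictConvexOn ℝ Set.univ (fun t : ℝ => Q (Function.update θbar j t) θbar) :=
    hQstrict θbar θbar j
  have ha : Q (Function.update θbar j (θbar j)) θbar = Q θbar θbar := by
    rw [Function.update_eq_self]
  exact strict_contra hg (a := θbar j) hc (by rw [h1, ha]) (by rw [h2, ha])

theorem coordinate_descent_cluster_point (D : ℕ)
    (Q H : (Fin D → ℝ) → (Fin D → ℝ) → ℝ)
    (hQcont : Continuous (fun p : (Fin D → ℝ) × (Fin D → ℝ) => Q p.1 p.2))
    (hQconv : ∀ y, ConvexOn ℝ Set.univ (fun x => Q x y))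
    (hQstrict : ∀ y x (j : Fin D),
      StrictConvexOn ℝ Set.univ (fun t : ℝ => Q (Function.update x j t) y))
    (ℓ : (Fin D → ℝ) → ℝ) (hℓ : ∀ x, ℓ x = Q x x - H x x)
    (θ : ℕ → Fin D → ℝ)
    (w : ℕ → ℕ → Fin D → ℝ)
    (hw0 : ∀ l, w l 0 = θ l) (hwD : ∀ l, w l D = θ (l + 1))
    (hwstep : ∀ l, ∀ j : Fin D,
      (∀ i : Fin D, i ≠ j → w l ((j : ℕ) + 1) i = w l (j : ℕ) i) ∧
      (∀ t : ℝ, Q (w l ((j : ℕ) + 1)) (θ l) ≤ Q (Function.update (w l (j : ℕ)) j t) (θ l)))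
    (hdiff : Tendsto (fun l => ℓ (θ l) - ℓ (θ (l + 1))) atTop (nhds 0))
    (hsurr : ∀ l, Q (θ l) (θ l) - Q (θ (l + 1)) (θ l) ≤ ℓ (θ l) - ℓ (θ (l + 1)))
    (θbar : Fin D → ℝ) (hcluster : MapClusterPt θbar atTop θ) :
    ∀ (j : Fin D) (t : ℝ), Q θbar θbar ≤ Q (Function.update θbar j t) θbar := by
  obtain ⟨κ, hκm, hκt⟩ := TopologicalSpace.FirstCountableTopology.tendsto_subseq hcluster
  set ε : ℕ → ℝ := fun l => Q (θ l) (θ l) - Q (θ (l + 1)) (θ l) with hεdef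
  -- nat-indexed versions of step properties
  have hwstep' : ∀ l n (hn : n < D) (t : ℝ),
      Q (w l (n + 1)) (θ l) ≤ Q (Function.update (w l n) ⟨n, hn⟩ t) (θ l) :=
    fun l n hn => (hwstep l ⟨n, hn⟩).2
  have hupdate : ∀ l n (hn : n < D),
      w l (n + 1) = Function.update (w l n) ⟨n, hn⟩ (w l (n + 1) ⟨n, hn⟩) := by
    intro l n hn
    funext i
    by_cases hi : i = (⟨n, hn⟩ : Fin D)
    · subst hi; rw [Function.update_self]
    · rw [Function.update_of_ne hi, (hwstep l ⟨n, hn⟩).1 i hi]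
  -- monotone chain of Q values
  have hchain : ∀ l n, n ≤ D → ∀ m, m ≤ n → Q (w l n) (θ l) ≤ Q (w l m) (θ l) := by
    intro l n
    induction n with
    | zero => intro _ m hm; interval_cases m; exact le_rfl
    | succ n ih =>
      intro hn m hm
      have hnD : n < D := hn
      have hstep : Q (w l (n + 1)) (θ l) ≤ Q (w l n) (θ l) := by
        have := hwstep' l n hnD (w l n ⟨n, hnD⟩)
        rwa [Function.update_eq_self] at this
      rcases Nat.eq_or_lt_of_le hm with h | h
      · rw [h]
      · exact hstep.trans (ih (le_of_lt hnD) m (Nat.lt_succ_iff.1 h))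
  have hεnonneg : ∀ l, 0 ≤ ε l := by
    intro l
    have := hchain l D le_rfl 0 (Nat.zero_le D)
    rw [hw0, hwD] at this
    simp only [hεdef]
    linarith
  have hεto0 : Tendsto ε atTop (nhds 0) :=
    tendsto_of_tendsto_of_tendsto_of_le_of_le tendsto_const_nhds hdiff hεnonneg hsurr
  have hgapj : ∀ l n (hn : n < D),
      Q (w l n) (θ l) - Q (w l (n + 1)) (θ l) ≤ ε l := by
    intro l n hn
    have h1 : Q (w l n) (θ l) ≤ Q (w l 0) (θ l) := hchain l n (le_of_lt hn) 0 (Nat.zero_le n)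
    have h2 : Q (w l D) (θ l) ≤ Q (w l (n + 1)) (θ l) := hchain l D le_rfl (n + 1) hn
    rw [hw0] at h1
    rw [hwD] at h2
    simp only [hεdef]
    linarith
  -- convergence of all intermediate iterates along the subsequence
  have hconv : ∀ n, n ≤ D → Tendsto (fun k => w (κ k) n) atTop (nhds θbar) := by
    intro n
    induction n with
    | zero =>
      intro _
      simp only [hw0]
      exact hκt
    | succ n ih =>
      intro hn
      have hnD : n < D := hn
      have ih' : Tendsto (fun k => w (κ k) n) atTop (nhds θbar) := ih (le_of_lt hnD)
      set j : Fin D := ⟨n, hnD⟩ with hj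
      set u : ℕ → ℝ := fun k => w (κ k) (n + 1) j with hu
      set s : ℕ → ℝ := fun k => w (κ k) n j with hsdef
      have hsj : Tendsto s atTop (nhds (θbar j)) := tendsto_pi_nhds.1 ih' j
      have hdiff0 : Tendsto (fun k => u k - s k) atTop (nhds 0) := by
        by_contra hcon
        rw [Metric.tendsto_atTop] at hcon
        push_neg at hcon
        obtain ⟨δ, hδ, hfr⟩ := hcon
        have hfr' : ∃ᶠ k in atTop, δ ≤ |u k - s k| := by
          rw [frequently_atTop]
          intro b
          obtain ⟨k, hk1, hk2⟩ := hfr b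
          refine ⟨k, hk1, ?_⟩
          rwa [Real.dist_eq, sub_zero] at hk2
        have hor : (∃ᶠ k in atTop, δ ≤ u k - s k) ∨ (∃ᶠ k in atTop, δ ≤ -(u k - s k)) :=
          frequently_or_distrib.1 (hfr'.mono fun k hk => le_abs.1 hk)
        -- common application of aux_contra
        have happ : ∀ (φ : ℕ → ℕ), StrictMono φ → ∀ (c : ℝ), c ≠ 0 →
            (∀ k, w (κ (φ k)) n j + c ∈ segment ℝ (w (κ (φ k)) n j) (u (φ k))) → False := by
          intro φ hφ c hc hseg
          refine aux_contra Q hQcont hQstrict θbar j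
            (fun k => w (κ (φ k)) n) (fun k => θ (κ (φ k))) (fun k => u (φ k))
            (fun k => ε (κ (φ k))) c hc
            (ih'.comp hφ.tendsto_atTop) (hκt.comp hφ.tendsto_atTop)
            ((hεto0.comp hκm.tendsto_atTop).comp hφ.tendsto_atTop) ?_ ?_ hseg
          · intro k t
            have h := hwstep' (κ (φ k)) n hnD t
            rwa [hupdate (κ (φ k)) n hnD] at h
          · intro k
            have h := hgapj (κ (φ k)) n hnD
            rwa [hupdate (κ (φ k)) n hnD] at h
        rcases hor with h | h
        · obtain ⟨φ, hφ, hφP⟩ := extraction_of_frequently_atTop h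
          refine happ φ hφ δ (ne_of_gt hδ) fun k => ?_
          rw [segment_eq_uIcc]
          exact Set.mem_uIcc.2 (Or.inl ⟨by linarith, by linarith [hφP k]⟩)
        · obtain ⟨φ, hφ, hφP⟩ := extraction_of_frequently_atTop h
          refine happ φ hφ (-δ) (by simp [ne_of_gt hδ]) fun k => ?_
          rw [segment_eq_uIcc]
          exact Set.mem_uIcc.2 (Or.inr ⟨by linarith [hφP k], by linarith⟩)
      have hut : Tendsto u atTop (nhds (θbar j)) := by
        have := hdiff0.add hsj
        simpa using this
      have hfinal : Tendsto (fun k => Function.update (w (κ k) n) j (u k)) atTop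
          (nhds (Function.update θbar j (θbar j))) := ih'.update j hut
      rw [Function.update_eq_self] at hfinal
      have heq : (fun k => w (κ k) (n + 1)) =
          fun k => Function.update (w (κ k) n) j (u k) :=
        funext fun k => hupdate (κ k) n hnD
      rw [heq]
      exact hfinal
  -- conclusion
  intro j t
  have hjD : (j : ℕ) < D := j.isLt
  have h1 : ∀ k, Q (w (κ k) ((j : ℕ) + 1)) (θ (κ k)) ≤
      Q (Function.update (w (κ k) (j : ℕ)) j t) (θ (κ k)) := by
    intro k
    have := hwstep' (κ k) (j : ℕ) hjD t
    convert this using 4 <;> simp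
  have hL : Tendsto (fun k => Q (w (κ k) ((j : ℕ) + 1)) (θ (κ k))) atTop
      (nhds (Q θbar θbar)) :=
    (hQcont.tendsto _).comp ((hconv ((j : ℕ) + 1) hjD).prodMk_nhds hκt)
  have hR : Tendsto (fun k => Q (Function.update (w (κ k) (j : ℕ)) j t) (θ (κ k))) atTop
      (nhds (Q (Function.update θbar j t) θbar)) :=
    tendsto_Q_update Q hQcont j (hconv (j : ℕ) (le_of_lt hjD)) hκt tendsto_const_nhds
  exact le_of_tendsto_of_tendsto' hL hR h1
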